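/- arXiv:1401.7315 — 3 statements merged into one kernel-verified Lean document; each statement's English description precedes it below -/
import Mathlib

section
/- Let δ ≥ 0 and let X be a geodesic metric space all of whose geodesic triangles are δ-thin. Let σ be the image of a geodesic segment in X, let a ∈ X, and let c ∈ σ be a nearest point of σ to a (i.e. dist(a,c) ≤ dist(a,w) for all w ∈ σ). Let b ∈ σ, let γ be the image of a geodesic segment from a to c, and let d ∈ γ be a nearest point of γ to b (dist(b,d) ≤ dist(b,w) for all w ∈ γ). Then dist(c,d) ≤ 2δ. -/
open Metric Set

/-- `s` is the image of a geodesic segment from `x` to `y`. -/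
def IsGeodesicSegment {X : Type*} [MetricSpace X] (x y : X) (s : Set X) : Prop :=
  ∃ γ : ℝ → X, γ 0 = x ∧ γ (dist x y) = y ∧
    (∀ u ∈ Icc (0 : ℝ) (dist x y), ∀ v ∈ Icc (0 : ℝ) (dist x y),
      dist (γ u) (γ v) = |u - v|) ∧
    s = γ '' Icc (0 : ℝ) (dist x y)

/-- A metric space is geodesic: any two points are joined by a geodesic segment. -/
def IsGeodesicMetricSpace (X : Type*) [MetricSpace X] : Prop :=
  ∀ x y : X, ∃ s : Set X, IsGeodesicSegment x y s

/-- All geodesic triangles of `X` are δ-thin: every point on any side lies within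
distance δ of the union of the other two sides. -/
def ThinTriangles (X : Type*) [MetricSpace X] (δ : ℝ) : Prop :=
  ∀ a b c : X, ∀ sab sbc sca : Set X,
    IsGeodesicSegment a b sab → IsGeodesicSegment b c sbc →
    IsGeodesicSegment c a sca →
    ∀ p ∈ sab, ∃ q ∈ sbc ∪ sca, dist p q ≤ δ

/- Auxiliary lemmas -/

lemma IsGeodesicSegment.left_mem {X : Type*} [MetricSpace X] {x y : X} {s : Set X}
    (h : IsGeodesicSegment x y s) : x ∈ s := by
  obtain ⟨g, h0, hL, _, hs⟩ := h
  rw [hs]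
  exact ⟨0, ⟨le_refl _, dist_nonneg⟩, h0⟩

lemma IsGeodesicSegment.right_mem {X : Type*} [MetricSpace X] {x y : X} {s : Set X}
    (h : IsGeodesicSegment x y s) : y ∈ s := by
  obtain ⟨g, h0, hL, _, hs⟩ := h
  rw [hs]
  exact ⟨dist x y, ⟨dist_nonneg, le_refl _⟩, hL⟩

lemma IsGeodesicSegment.symm {X : Type*} [MetricSpace X] {x y : X} {s : Set X}
    (h : IsGeodesicSegment x y s) : IsGeodesicSegment y x s := by
  obtain ⟨g, h0, hL, hiso, hs⟩ := h
  set L := dist x y with hLdef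
  have hyx : dist y x = L := dist_comm y x
  refine ⟨fun t => g (L - t), by simp [hyx, hL], by simp [hyx, h0], ?_, ?_⟩
  · intro u hu v hv
    rw [hyx] at hu hv
    have h1 : L - u ∈ Icc (0 : ℝ) L := ⟨by linarith [hu.2], by linarith [hu.1]⟩
    have h2 : L - v ∈ Icc (0 : ℝ) L := ⟨by linarith [hv.2], by linarith [hv.1]⟩
    rw [hiso _ h1 _ h2, show L - u - (L - v) = v - u by ring, abs_sub_comm]
  · rw [hs, hyx]
    have : (fun t => g (L - t)) '' Icc (0 : ℝ) L = g '' ((fun t => L - t) '' Icc (0 : ℝ) L) := by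
      rw [Set.image_image]
    rw [this, Set.image_const_sub_Icc]
    norm_num

lemma IsGeodesicSegment.subseg {X : Type*} [MetricSpace X] {g : ℝ → X} {L : ℝ}
    (hiso : ∀ u ∈ Icc (0 : ℝ) L, ∀ v ∈ Icc (0 : ℝ) L, dist (g u) (g v) = |u - v|)
    {u v : ℝ} (hu : u ∈ Icc (0 : ℝ) L) (hv : v ∈ Icc (0 : ℝ) L) (huv : u ≤ v) :
    IsGeodesicSegment (g u) (g v) (g '' Icc u v) := by
  have hd : dist (g u) (g v) = v - u := by
    rw [hiso _ hu _ hv, abs_sub_comm, abs_of_nonneg (by linarith)]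
  refine ⟨fun t => g (u + t), by simp, by rw [hd]; ring_nf, ?_, ?_⟩
  · intro s hs t ht
    rw [hd] at hs ht
    have h1 : u + s ∈ Icc (0 : ℝ) L :=
      ⟨by linarith [hu.1, hs.1], by linarith [hs.2, hv.2]⟩
    have h2 : u + t ∈ Icc (0 : ℝ) L :=
      ⟨by linarith [hu.1, ht.1], by linarith [ht.2, hv.2]⟩
    rw [hiso _ h1 _ h2]
    ring_nf
  · rw [hd]
    have : (fun t => g (u + t)) '' Icc (0 : ℝ) (v - u)
        = g '' ((fun t => u + t) '' Icc (0 : ℝ) (v - u)) := by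
      rw [Set.image_image]
    rw [this, Set.image_const_add_Icc]
    norm_num

theorem stmt_11
    {X : Type*} [MetricSpace X] (δ : ℝ) (hδ : 0 ≤ δ)
    (hgeo : IsGeodesicMetricSpace X) (hthin : ThinTriangles X δ)
    (σ : Set X) (e₁ e₂ : X) (hσ : IsGeodesicSegment e₁ e₂ σ)
    (a : X) (c : X) (hcσ : c ∈ σ) (hcnear : ∀ w ∈ σ, dist a c ≤ dist a w)
    (b : X) (hb : b ∈ σ)
    (γ : Set X) (hγ : IsGeodesicSegment a c γ)
    (d : X) (hdγ : d ∈ γ) (hdnear : ∀ w ∈ γ, dist b d ≤ dist b w) :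
    dist c d ≤ 2 * δ := by
  classical
  -- A geodesic segment from b to c inside σ
  obtain ⟨gσ, hσ0, hσL, hσiso, hσeq⟩ := hσ
  rw [hσeq] at hb hcσ
  obtain ⟨ub, hub, hgb⟩ := hb
  obtain ⟨vc, hvc, hgc⟩ := hcσ
  have hσsub : ∀ u' v' : ℝ, u' ∈ Icc (0:ℝ) (dist e₁ e₂) → v' ∈ Icc (0:ℝ) (dist e₁ e₂) →
      gσ '' Icc u' v' ⊆ σ := by
    intro u' v' hu' hv'
    rw [hσeq]
    exact Set.image_mono (Set.Icc_subset_Icc hu'.1 hv'.2)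
  obtain ⟨sbc, hsbc, hsub⟩ : ∃ s : Set X, IsGeodesicSegment b c s ∧ s ⊆ σ := by
    rcases le_total ub vc with h | h
    · refine ⟨gσ '' Icc ub vc, ?_, hσsub _ _ hub hvc⟩
      have := IsGeodesicSegment.subseg hσiso hub hvc h
      rwa [hgb, hgc] at this
    · refine ⟨gσ '' Icc vc ub, ?_, hσsub _ _ hvc hub⟩
      have := (IsGeodesicSegment.subseg hσiso hvc hub h).symm
      rwa [hgb, hgc] at this
  -- a geodesic from a to b
  obtain ⟨sab, hsab⟩ := hgeo a b
  -- nonemptiness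
  have hγne : γ.Nonempty := ⟨d, hdγ⟩
  have hsbcne : sbc.Nonempty := ⟨b, hsbc.left_mem⟩
  -- parametrize sab
  obtain ⟨h, h0, hM, hiso, hseq⟩ := hsab
  set M := dist a b with hMdef
  have hMnn : (0:ℝ) ≤ M := dist_nonneg
  -- the function f t = infDist (h t) γ - infDist (h t) sbc on [0, M]
  set f : ℝ → ℝ := fun t => infDist (h t) γ - infDist (h t) sbc with hfdef
  have hcont : ContinuousOn f (Icc 0 M) := by
    have hlip : LipschitzOnWith 1 h (Icc 0 M) := by
      apply LipschitzOnWith.of_dist_le_mul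
      intro x hx y hy
      rw [hiso _ hx _ hy, Real.dist_eq]
      simp
    have hh : ContinuousOn h (Icc 0 M) := hlip.continuousOn
    exact ((continuous_infDist_pt γ).comp_continuousOn hh).sub
      ((continuous_infDist_pt sbc).comp_continuousOn hh)
  have hf0 : f 0 ≤ 0 := by
    have : infDist (h 0) γ = 0 := by
      rw [h0]
      exact infDist_zero_of_mem hγ.left_mem
    simp only [hfdef, this]
    simp [infDist_nonneg]
  have hfM : 0 ≤ f M := by
    have : infDist (h M) sbc = 0 := by
      rw [hM]
      exact infDist_zero_of_mem hsbc.left_mem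
    simp only [hfdef, this]
    simp [infDist_nonneg]
  -- intermediate value theorem: find t with f t = 0
  obtain ⟨t, ht, hft⟩ := intermediate_value_Icc hMnn hcont ⟨hf0, hfM⟩
  set p := h t with hpdef
  -- both infDists at p are ≤ δ via thinness
  have hpmem : p ∈ sab := by
    rw [hseq]; exact ⟨t, ht, rfl⟩
  have hsab' : IsGeodesicSegment a b sab := ⟨h, h0, hM, hiso, hseq⟩
  obtain ⟨q, hq, hdq⟩ := hthin a b c sab sbc γ hsab' hsbc hγ.symm p hpmem
  have hboth : infDist p γ ≤ δ ∧ infDist p sbc ≤ δ := by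
    have heq : infDist p γ = infDist p sbc := by
      have : f t = 0 := hft
      simp only [hfdef] at this
      linarith
    rcases hq with hq | hq
    · have h1 : infDist p sbc ≤ δ := le_trans (infDist_le_dist_of_mem hq) hdq
      exact ⟨heq ▸ h1, h1⟩
    · have h1 : infDist p γ ≤ δ := le_trans (infDist_le_dist_of_mem hq) hdq
      exact ⟨h1, heq ▸ h1⟩
  -- key inequality 1 : dist a c ≤ dist a p + δ
  have k1 : dist a c ≤ dist a p + δ := by
    have : dist a c - dist a p ≤ infDist p sbc := by
      by_contra hcon
      push_neg at hcon
      obtain ⟨w, hw, hw'⟩ := (infDist_lt_iff hsbcne).1 hcon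
      have h1 : dist a c ≤ dist a w := hcnear w (hsub hw)
      have h2 : dist a w ≤ dist a p + dist p w := dist_triangle a p w
      linarith
    linarith [hboth.2]
  -- key inequality 2 : dist b d ≤ dist b p + δ
  have k2 : dist b d ≤ dist b p + δ := by
    have : dist b d - dist b p ≤ infDist p γ := by
      by_contra hcon
      push_neg at hcon
      obtain ⟨w, hw, hw'⟩ := (infDist_lt_iff hγne).1 hcon
      have h1 : dist b d ≤ dist b w := hdnear w hw
      have h2 : dist b w ≤ dist b p + dist p w := dist_triangle b p w
      linarith
    linarith [hboth.1]
  -- key equality : dist a p + dist p b = dist a b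
  have k3 : dist a p + dist p b = dist a b := by
    have h1 : dist a p = t := by
      have hh := hiso 0 ⟨le_refl _, hMnn⟩ t ht
      rw [h0] at hh
      rw [hpdef, hh, zero_sub, abs_neg, abs_of_nonneg ht.1]
    have h2 : dist p b = M - t := by
      have hh := hiso t ht M ⟨hMnn, le_refl _⟩
      rw [hM] at hh
      rw [hpdef, hh, abs_of_nonpos (by linarith [ht.2])]
      ring
    rw [h1, h2, ← hMdef]; ring
  -- key equality : dist a d + dist d c = dist a c
  have k4 : dist a d + dist d c = dist a c := by
    obtain ⟨gγ, hγ0, hγL, hγiso, hγeq⟩ := hγ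
    rw [hγeq] at hdγ
    obtain ⟨s, hs, hgs⟩ := hdγ
    have h1 : dist a d = s := by
      have hh := hγiso 0 ⟨le_refl _, dist_nonneg⟩ s hs
      rw [hγ0, hgs] at hh
      rw [hh, zero_sub, abs_neg, abs_of_nonneg hs.1]
    have h2 : dist d c = dist a c - s := by
      have hh := hγiso s hs (dist a c) ⟨dist_nonneg, le_refl _⟩
      rw [hγL, hgs] at hh
      rw [hh, abs_of_nonpos (by linarith [hs.2])]
      ring
    rw [h1, h2]; ring
  have k5 : dist a b ≤ dist a d + dist d b := dist_triangle a d b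
  have e1 : dist c d = dist d c := dist_comm c d
  have e2 : dist d b = dist b d := dist_comm d b
  have e3 : dist p b = dist b p := dist_comm p b
  linarith
end

section
/- Let δ ≥ 0 and let X be a geodesic metric space all of whose geodesic triangles are δ-thin. Let σ be the image of a geodesic segment in X, let a ∈ X, let c ∈ σ be a nearest point of σ to a (dist(a,c) ≤ dist(a,w) for all w ∈ σ), and let b ∈ σ. Then |dist(a,b) − (dist(a,c) + dist(c,b))| ≤ 8δ, and moreover for every geodesic segment g from a to b, the point c lies within distance 2δ of the image of g. -/
open Metric Set

lemma IsGeodesicSegment.isCompact {X : Type*} [MetricSpace X] {x y : X} {s : Set X}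
    (h : IsGeodesicSegment x y s) : IsCompact s := by
  obtain ⟨γ, h0, hL, hiso, hs⟩ := h
  rw [hs]
  apply isCompact_Icc.image_of_continuousOn
  have : LipschitzOnWith 1 γ (Icc (0:ℝ) (dist x y)) := by
    apply LipschitzOnWith.of_dist_le_mul
    intro u hu v hv
    rw [hiso u hu v hv, NNReal.coe_one, one_mul, Real.dist_eq]
  exact this.continuousOn

/-- A sub-segment of a geodesic segment between two of its points is again a
geodesic segment, contained in the original one. -/
lemma IsGeodesicSegment.exists_sub {X : Type*} [MetricSpace X] {x y : X} {s : Set X}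
    (h : IsGeodesicSegment x y s) {p q : X} (hp : p ∈ s) (hq : q ∈ s) :
    ∃ s', IsGeodesicSegment p q s' ∧ s' ⊆ s := by
  obtain ⟨γ, h0, hL, hiso, hs⟩ := h
  rw [hs] at hp hq
  obtain ⟨u, hu, rfl⟩ := hp
  obtain ⟨v, hv, rfl⟩ := hq
  have hD : dist (γ u) (γ v) = |u - v| := hiso u hu v hv
  rcases le_total u v with huv | huv
  · have hDv : dist (γ u) (γ v) = v - u := by rw [hD, abs_of_nonpos (by linarith)]; ring
    have hmem : ∀ w ∈ Icc (0:ℝ) (dist (γ u) (γ v)), u + w ∈ Icc (0:ℝ) (dist x y) := by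
      intro w hw
      constructor
      · linarith [hu.1, hw.1]
      · have : u + w ≤ v := by rw [hDv] at hw; linarith [hw.2]
        linarith [hv.2]
    refine ⟨(fun w => γ (u + w)) '' Icc 0 (dist (γ u) (γ v)),
      ⟨fun w => γ (u + w), by norm_num, by rw [hDv]; norm_num, ?_, rfl⟩, ?_⟩
    · intro w hw z hz
      rw [hiso _ (hmem w hw) _ (hmem z hz)]
      congr 1; ring
    · rintro _ ⟨w, hw, rfl⟩
      rw [hs]
      exact ⟨u + w, hmem w hw, rfl⟩
  · have hDv : dist (γ u) (γ v) = u - v := by rw [hD, abs_of_nonneg (by linarith)]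
    have hmem : ∀ w ∈ Icc (0:ℝ) (dist (γ u) (γ v)), u - w ∈ Icc (0:ℝ) (dist x y) := by
      intro w hw
      constructor
      · have : w ≤ u - v := by rw [hDv] at hw; linarith [hw.2]
        linarith [hv.1]
      · linarith [hu.2, hw.1]
    refine ⟨(fun w => γ (u - w)) '' Icc 0 (dist (γ u) (γ v)),
      ⟨fun w => γ (u - w), by norm_num, by rw [hDv]; norm_num, ?_, rfl⟩, ?_⟩
    · intro w hw z hz
      rw [hiso _ (hmem w hw) _ (hmem z hz)]
      rw [show u - w - (u - z) = -(w - z) by ring, abs_neg]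
    · rintro _ ⟨w, hw, rfl⟩
      rw [hs]
      exact ⟨u - w, hmem w hw, rfl⟩

/-- Key lemma: any geodesic from `a` to `b` passes within `2δ` of the projection `c`. -/
lemma key_lemma
    {X : Type*} [MetricSpace X] (δ : ℝ) (hδ : 0 ≤ δ)
    (hgeo : IsGeodesicMetricSpace X) (hthin : ThinTriangles X δ)
    (σ : Set X) (e₁ e₂ : X) (hσ : IsGeodesicSegment e₁ e₂ σ)
    (a : X) (c : X) (hcσ : c ∈ σ) (hcnear : ∀ w ∈ σ, dist a c ≤ dist a w)
    (b : X) (hb : b ∈ σ) :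
    ∀ g : Set X, IsGeodesicSegment a b g → ∃ w ∈ g, dist c w ≤ 2 * δ := by
  intro g hg
  have hag : a ∈ g := hg.left_mem
  by_cases hca : dist c a ≤ 2 * δ
  · exact ⟨a, hag, hca⟩
  push_neg at hca
  -- sub-geodesic of σ from b to c
  obtain ⟨sbc, hsbc, hsbcσ⟩ := hσ.exists_sub hb hcσ
  -- geodesic from c to a
  obtain ⟨sca, hsca⟩ := hgeo c a
  obtain ⟨γ, hγ0, hγL, hγiso, hγs⟩ := hsca
  have hinf : infDist c g ≤ 2 * δ := by
    apply le_of_forall_pos_le_add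
    intro ε hε
    set t := min (δ + ε) ((δ + dist c a) / 2) with ht
    have htδ : δ < t := by
      apply lt_min (by linarith)
      linarith
    have htca : t ≤ dist c a := by
      apply le_trans (min_le_right _ _)
      linarith
    have htmem : t ∈ Icc (0:ℝ) (dist c a) := ⟨by linarith, htca⟩
    have hxmem : γ t ∈ sca := by
      rw [hγs]; exact ⟨t, htmem, rfl⟩
    have h0mem : (0:ℝ) ∈ Icc (0:ℝ) (dist c a) := ⟨le_refl 0, dist_nonneg⟩
    have hLmem : dist c a ∈ Icc (0:ℝ) (dist c a) := ⟨dist_nonneg, le_refl _⟩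
    have hcx : dist c (γ t) = t := by
      rw [← hγ0, hγiso 0 h0mem t htmem]
      rw [abs_of_nonpos (by linarith)]; ring
    have hxa : dist (γ t) a = dist c a - t := by
      have h := hγiso t htmem _ hLmem
      rw [hγL] at h
      rw [h, abs_of_nonpos (by linarith)]; ring
    obtain ⟨q, hq, hdq⟩ := hthin c a b sca g sbc ⟨γ, hγ0, hγL, hγiso, hγs⟩ hg hsbc (γ t) hxmem
    rcases hq with hqg | hqσ
    · calc infDist c g ≤ dist c q := infDist_le_dist_of_mem hqg
        _ ≤ dist c (γ t) + dist (γ t) q := dist_triangle _ _ _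
        _ ≤ t + δ := by rw [hcx]; linarith
        _ ≤ 2 * δ + ε := by
          have : t ≤ δ + ε := min_le_left _ _
          linarith
    · exfalso
      have hqσ' : q ∈ σ := hsbcσ hqσ
      have h1 : dist a c ≤ dist a q := hcnear q hqσ'
      have h2 : dist a q ≤ dist a (γ t) + dist (γ t) q := dist_triangle _ _ _
      have h3 : dist a (γ t) = dist c a - t := by rw [dist_comm]; exact hxa
      have h4 : dist a c = dist c a := dist_comm a c
      linarith
  obtain ⟨w, hwg, hwd⟩ := hg.isCompact.exists_infDist_eq_dist ⟨a, hag⟩ c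
  exact ⟨w, hwg, by rw [← hwd]; exact hinf⟩

theorem stmt_12
    {X : Type*} [MetricSpace X] (δ : ℝ) (hδ : 0 ≤ δ)
    (hgeo : IsGeodesicMetricSpace X) (hthin : ThinTriangles X δ)
    (σ : Set X) (e₁ e₂ : X) (hσ : IsGeodesicSegment e₁ e₂ σ)
    (a : X) (c : X) (hcσ : c ∈ σ) (hcnear : ∀ w ∈ σ, dist a c ≤ dist a w)
    (b : X) (hb : b ∈ σ) :
    |dist a b - (dist a c + dist c b)| ≤ 8 * δ ∧
      ∀ g : Set X, IsGeodesicSegment a b g → ∃ w ∈ g, dist c w ≤ 2 * δ := by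
  have key := key_lemma δ hδ hgeo hthin σ e₁ e₂ hσ a c hcσ hcnear b hb
  refine ⟨?_, key⟩
  obtain ⟨g, hg⟩ := hgeo a b
  obtain ⟨w, hwg, hw⟩ := key g hg
  obtain ⟨γ, hγ0, hγL, hγiso, hγs⟩ := hg
  rw [hγs] at hwg
  obtain ⟨u, hu, rfl⟩ := hwg
  have h0mem : (0:ℝ) ∈ Icc (0:ℝ) (dist a b) := ⟨le_refl 0, dist_nonneg⟩
  have hLmem : dist a b ∈ Icc (0:ℝ) (dist a b) := ⟨dist_nonneg, le_refl _⟩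
  have haw : dist a (γ u) = u := by
    rw [← hγ0, hγiso 0 h0mem u hu, abs_of_nonpos (by linarith [hu.1])]; ring
  have hwb : dist (γ u) b = dist a b - u := by
    have h := hγiso u hu _ hLmem
    rw [hγL] at h
    rw [h, abs_of_nonpos (by linarith [hu.2])]; ring
  have h1 : dist a b ≤ dist a c + dist c b := dist_triangle _ _ _
  have h2 : dist a c ≤ dist a (γ u) + dist (γ u) c := dist_triangle _ _ _
  have h3 : dist c b ≤ dist c (γ u) + dist (γ u) b := dist_triangle _ _ _
  have h4 : dist (γ u) c = dist c (γ u) := dist_comm _ _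
  rw [abs_le]
  constructor <;> [linarith; linarith]
end

section
/- There exists a universal constant K > 0 with the following property. Let δ ≥ 0 and let X be a geodesic metric space all of whose geodesic triangles are δ-thin. Let P₀, Q₁, Q₂ ∈ X, let P₁ be a point on the image of a geodesic segment from P₀ to Q₁, and let P₂ be a point on the image of a geodesic segment from P₀ to Q₂. Set t₁ = dist(P₀,P₁), t₂ = dist(P₀,P₂), and t∞ = (dist(P₀,Q₁) + dist(P₀,Q₂) − dist(Q₁,Q₂))/2 (the Gromov product of Q₁ and Q₂ at P₀). Then |dist(P₁,P₂) − (t₁ + t₂ − 2·min(t₁, t₂, t∞))| ≤ K·δ. -/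
open Metric Set

universe u

/-- Gromov product of `x` and `y` seen from `w`. -/
noncomputable def gp {X : Type u} [MetricSpace X] (w x y : X) : ℝ :=
  (dist w x + dist w y - dist x y) / 2

lemma gp_comm {X : Type u} [MetricSpace X] (w x y : X) : gp w x y = gp w y x := by
  unfold gp
  rw [dist_comm x y]
  ring

lemma gp_le_dist_left {X : Type u} [MetricSpace X] (w x y : X) : gp w x y ≤ dist w x := by
  have h := dist_triangle w x y
  simp only [gp]
  linarith

lemma gp_le_dist_right {X : Type u} [MetricSpace X] (w x y : X) : gp w x y ≤ dist w y := by
  rw [gp_comm]; exact gp_le_dist_left w y x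

/-- A point on a geodesic segment from `x` to `y` lies metrically between them. -/
lemma dist_add_of_mem_seg {X : Type u} [MetricSpace X] {x y p : X} {s : Set X}
    (h : IsGeodesicSegment x y s) (hp : p ∈ s) :
    dist x p + dist p y = dist x y := by
  obtain ⟨γ, h0, hL, hiso, hseq⟩ := h
  rw [hseq] at hp
  obtain ⟨t, ht, rfl⟩ := hp
  have h0m : (0:ℝ) ∈ Icc 0 (dist x y) := ⟨le_refl _, dist_nonneg⟩
  have hLm : dist x y ∈ Icc 0 (dist x y) := ⟨dist_nonneg, le_refl _⟩
  have d1 : dist x (γ t) = t := by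
    rw [← h0, hiso 0 h0m t ht, abs_of_nonpos (by linarith [ht.1])]
    ring
  have d2 : dist (γ t) y = dist x y - t := by
    have h := hiso t ht (dist x y) hLm
    rw [hL] at h
    rw [h, abs_of_nonpos (by linarith [ht.2])]
    ring
  linarith

lemma gp_le_dist_of_mem {X : Type u} [MetricSpace X] {x y p : X} {s : Set X}
    (h : IsGeodesicSegment x y s) (hp : p ∈ s) (w : X) :
    gp w x y ≤ dist w p := by
  have h1 := dist_add_of_mem_seg h hp
  have h2 := dist_triangle w p x
  have h3 := dist_triangle w p y
  have h4 := dist_comm p x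
  simp only [gp]
  linarith

/-- In a geodesic space with δ-thin triangles, the distance from `w` to a geodesic
segment from `x` to `y` is at most the Gromov product plus `2δ`. -/
lemma close_point {X : Type u} [MetricSpace X] {δ : ℝ}
    (hgeo : IsGeodesicMetricSpace X) (hthin : ThinTriangles X δ)
    (w x y : X) {s : Set X} (hs : IsGeodesicSegment x y s) :
    ∃ p ∈ s, dist w p ≤ gp w x y + 2 * δ := by
  obtain ⟨γ, h0, hL, hiso, hseq⟩ := hs
  set t : ℝ := (dist x y + dist x w - dist y w) / 2 with ht_def
  have h0m : (0:ℝ) ∈ Icc 0 (dist x y) := ⟨le_refl _, dist_nonneg⟩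
  have hLm : dist x y ∈ Icc 0 (dist x y) := ⟨dist_nonneg, le_refl _⟩
  have ht : t ∈ Icc (0:ℝ) (dist x y) := by
    constructor
    · have h1 := dist_triangle y x w
      have h2 := dist_comm y x
      simp only [ht_def]
      linarith
    · have h1 := dist_triangle x y w
      have h2 := dist_comm y w
      simp only [ht_def]
      linarith
  have hpm : γ t ∈ s := by rw [hseq]; exact mem_image_of_mem _ ht
  refine ⟨γ t, hpm, ?_⟩
  obtain ⟨s2, hs2⟩ := hgeo y w
  obtain ⟨s3, hs3⟩ := hgeo w x
  have hsg : IsGeodesicSegment x y s := ⟨γ, h0, hL, hiso, hseq⟩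
  obtain ⟨q, hq, hdq⟩ := hthin x y w s s2 s3 hsg hs2 hs3 (γ t) hpm
  have d1 : dist x (γ t) = t := by
    rw [← h0, hiso 0 h0m t ht, abs_of_nonpos (by linarith [ht.1])]
    ring
  have d2 : dist (γ t) y = dist x y - t := by
    have h := hiso t ht (dist x y) hLm
    rw [hL] at h
    rw [h, abs_of_nonpos (by linarith [ht.2])]
    ring
  cases hq with
  | inl hq2 =>
    -- q on the segment from y to w
    have e1 := dist_add_of_mem_seg hs2 hq2
    have h1 := dist_triangle y q (γ t)
    have h2 := dist_triangle w q (γ t)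
    have c1 := dist_comm (γ t) y
    have c2 := dist_comm (γ t) q
    have c3 := dist_comm y w
    have c4 := dist_comm q w
    have c5 := dist_comm x w
    simp only [gp, ht_def] at *
    linarith
  | inr hq3 =>
    -- q on the segment from w to x
    have e1 := dist_add_of_mem_seg hs3 hq3
    have h1 := dist_triangle x q (γ t)
    have h2 := dist_triangle w q (γ t)
    have c2 := dist_comm (γ t) q
    have c3 := dist_comm w y
    have c4 := dist_comm q x
    have c5 := dist_comm x w
    simp only [gp, ht_def] at *
    linarith

/-- Four-point (Gromov) hyperbolicity inequality with constant `3δ`. -/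
lemma four_point {X : Type u} [MetricSpace X] {δ : ℝ}
    (hgeo : IsGeodesicMetricSpace X) (hthin : ThinTriangles X δ)
    (w x y z : X) :
    min (gp w x y) (gp w y z) - 3 * δ ≤ gp w x z := by
  obtain ⟨sxz, hsxz⟩ := hgeo x z
  obtain ⟨p, hp, hdp⟩ := close_point hgeo hthin w x z hsxz
  obtain ⟨szy, hszy⟩ := hgeo z y
  obtain ⟨syx, hsyx⟩ := hgeo y x
  obtain ⟨q, hq, hdq⟩ := hthin x z y sxz szy syx hsxz hszy hsyx p hp
  have hwq : dist w q ≤ dist w p + δ := by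
    have := dist_triangle w p q
    linarith
  cases hq with
  | inl h =>
    have h1 := gp_le_dist_of_mem hszy h w
    have h2 : gp w y z = gp w z y := gp_comm w y z
    have h3 := min_le_right (gp w x y) (gp w y z)
    linarith
  | inr h =>
    have h1 := gp_le_dist_of_mem hsyx h w
    have h2 : gp w x y = gp w y x := gp_comm w x y
    have h3 := min_le_left (gp w x y) (gp w y z)
    linarith

theorem stmt_13 :
    ∃ K : ℝ, 0 < K ∧
      ∀ (δ : ℝ), 0 ≤ δ →
      ∀ (X : Type u) (_ : MetricSpace X),
        IsGeodesicMetricSpace X → ThinTriangles X δ →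
        ∀ (P₀ Q₁ Q₂ P₁ P₂ : X) (s₁ s₂ : Set X),
          IsGeodesicSegment P₀ Q₁ s₁ → P₁ ∈ s₁ →
          IsGeodesicSegment P₀ Q₂ s₂ → P₂ ∈ s₂ →
          |dist P₁ P₂ -
              (dist P₀ P₁ + dist P₀ P₂ -
                2 * min (dist P₀ P₁) (min (dist P₀ P₂)
                  ((dist P₀ Q₁ + dist P₀ Q₂ - dist Q₁ Q₂) / 2)))| ≤ K * δ := by
  refine ⟨12, by norm_num, ?_⟩
  intro δ hδ X _ hgeo hthin P₀ Q₁ Q₂ P₁ P₂ s₁ s₂ hs₁ hP₁ hs₂ hP₂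
  set t₁ := dist P₀ P₁ with ht₁
  set t₂ := dist P₀ P₂ with ht₂
  set tinf := (dist P₀ Q₁ + dist P₀ Q₂ - dist Q₁ Q₂) / 2 with htinf
  set g := gp P₀ P₁ P₂ with hg
  set m := min t₁ (min t₂ tinf) with hm
  -- basic identities
  have e1 : gp P₀ P₁ Q₁ = t₁ := by
    have := dist_add_of_mem_seg hs₁ hP₁
    simp only [gp, ht₁]
    linarith
  have e2 : gp P₀ P₂ Q₂ = t₂ := by
    have := dist_add_of_mem_seg hs₂ hP₂
    simp only [gp, ht₂]
    linarith
  have einf : gp P₀ Q₁ Q₂ = tinf := rfl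
  have hgt1 : g ≤ t₁ := gp_le_dist_left P₀ P₁ P₂
  have hgt2 : g ≤ t₂ := gp_le_dist_right P₀ P₁ P₂
  have hm1 : m ≤ t₁ := min_le_left _ _
  have hm2 : m ≤ t₂ := le_trans (min_le_right _ _) (min_le_left _ _)
  have hm3 : m ≤ tinf := le_trans (min_le_right _ _) (min_le_right _ _)
  -- lower bound: g ≥ m - 6δ
  have L2 := four_point hgeo hthin P₀ P₁ Q₁ Q₂
  rw [e1, einf] at L2
  have hB : m - 3 * δ ≤ gp P₀ P₁ Q₂ := by
    have : m ≤ min t₁ tinf := le_min hm1 hm3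
    linarith
  have L1 := four_point hgeo hthin P₀ P₁ Q₂ P₂
  have eq1 : gp P₀ Q₂ P₂ = t₂ := by rw [gp_comm]; exact e2
  rw [eq1] at L1
  have hLB : m - 6 * δ ≤ g := by
    have : m - 3 * δ ≤ min (gp P₀ P₁ Q₂) t₂ := le_min hB (by linarith)
    linarith
  -- upper bound: g ≤ m + 6δ
  have U2 := four_point hgeo hthin P₀ P₁ P₂ Q₂
  rw [e2] at U2
  have hU2 : g - 3 * δ ≤ gp P₀ P₁ Q₂ := by
    have : min g t₂ = g := min_eq_left hgt2
    rw [this] at U2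
    linarith
  have U1 := four_point hgeo hthin P₀ Q₁ P₁ Q₂
  have eq2 : gp P₀ Q₁ P₁ = t₁ := by rw [gp_comm]; exact e1
  rw [eq2, einf] at U1
  have hginf : g ≤ tinf + 6 * δ := by
    have : g - 3 * δ ≤ min t₁ (gp P₀ P₁ Q₂) := le_min (by linarith) hU2
    linarith
  have hUB : g ≤ m + 6 * δ := by
    have : g - 6 * δ ≤ m := le_min (by linarith) (le_min (by linarith) (by linarith))
    linarith
  -- conclude
  have hdist : dist P₁ P₂ = t₁ + t₂ - 2 * g := by
    simp only [hg, gp, ht₁, ht₂]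
    ring
  rw [abs_le]
  constructor <;> [skip; skip] <;>
  · rw [hdist]
    have := hLB
    have := hUB
    linarith
end
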